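/- arXiv:1612.09368 — 2 statements merged into one kernel-verified Lean document; each statement's English description precedes it below -/
import Mathlib

section
/- If a k-superior edge set E_k is inserted into a graph G, then for every vertex v with core_G(v) = k, the core number of v increases by at most 1. -/
open SimpleGraph

/-- The core number of a vertex: the largest `k` such that the vertex lies in a
subgraph of `G` with minimum degree at least `k`. -/
noncomputable def coreNumber {V : Type*} (G : SimpleGraph V) (v : V) : ℕ :=
  sSup {k : ℕ | ∃ H : G.Subgraph, v ∈ H.verts ∧ ∀ w ∈ H.verts, k ≤ (H.neighborSet w).ncard}

/-- `S` is a `k`-superior edge set of new edges with respect to `G`. -/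
def IsKSuperiorInsertSet {V : Type*} (G : SimpleGraph V) (k : ℕ) (S : Set (Sym2 V)) : Prop :=
  (∀ e ∈ S, e ∉ G.edgeSet ∧ ∃ u v : V, u ≠ v ∧ e = s(u,v) ∧
      coreNumber G u = k ∧ coreNumber G u ≤ coreNumber G v) ∧
  ∀ e₁ ∈ S, ∀ e₂ ∈ S, e₁ ≠ e₂ → ∀ u : V, u ∈ e₁ → u ∈ e₂ → k < coreNumber G u

lemma coreSet_zero_mem {V : Type*} (G : SimpleGraph V) (v : V) :
    0 ∈ {k : ℕ | ∃ H : G.Subgraph, v ∈ H.verts ∧ ∀ w ∈ H.verts, k ≤ (H.neighborSet w).ncard} :=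
  ⟨SimpleGraph.singletonSubgraph G v, by simp, fun w _ => Nat.zero_le _⟩

lemma coreSet_bddAbove {V : Type*} [Fintype V] (G : SimpleGraph V) (v : V) :
    BddAbove {k : ℕ | ∃ H : G.Subgraph, v ∈ H.verts ∧
      ∀ w ∈ H.verts, k ≤ (H.neighborSet w).ncard} := by
  refine ⟨Fintype.card V, fun k hk => ?_⟩
  obtain ⟨H, hvH, hdeg⟩ := hk
  calc k ≤ (H.neighborSet v).ncard := hdeg v hvH
    _ ≤ (Set.univ : Set V).ncard := Set.ncard_le_ncard (Set.subset_univ _) Set.finite_univ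
    _ = Fintype.card V := by simp [Set.ncard_univ]

lemma coreNumber_witness {V : Type*} [Fintype V] (G : SimpleGraph V) (v : V) :
    ∃ H : G.Subgraph, v ∈ H.verts ∧ ∀ w ∈ H.verts, coreNumber G v ≤ (H.neighborSet w).ncard :=
  Nat.sSup_mem ⟨0, coreSet_zero_mem G v⟩ (coreSet_bddAbove G v)

theorem kSuperiorInsert_core_increase_le_one {V : Type*} [Fintype V] (G : SimpleGraph V)
    (k : ℕ) (S : Set (Sym2 V)) (hS : IsKSuperiorInsertSet G k S)
    (v : V) (hv : coreNumber G v = k) :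
    coreNumber (G ⊔ fromEdgeSet S) v ≤ k + 1 := by
  obtain ⟨hS1, hS2⟩ := hS
  apply csSup_le' (a := k + 1)
  rintro m ⟨H, hvH, hdeg⟩
  by_contra hm
  push_neg at hm
  have hm2 : k + 2 ≤ m := hm
  -- The union of all subgraphs of G with min degree ≥ k+1
  set K : G.Subgraph :=
    ⨆ (H' : G.Subgraph) (_ : ∀ x ∈ H'.verts, k + 1 ≤ (H'.neighborSet x).ncard), H' with hKdef
  have hKverts : ∀ x, x ∈ K.verts ↔
      ∃ H' : G.Subgraph, (∀ y ∈ H'.verts, k + 1 ≤ (H'.neighborSet y).ncard) ∧ x ∈ H'.verts := by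
    intro x
    simp only [hKdef, SimpleGraph.Subgraph.verts_iSup, Set.mem_iUnion]
    tauto
  have hKdeg : ∀ x ∈ K.verts, k + 1 ≤ (K.neighborSet x).ncard := by
    intro x hx
    obtain ⟨H', hH', hxH'⟩ := (hKverts x).1 hx
    have hle : H' ≤ K := by
      refine le_trans ?_ (le_iSup _ H')
      exact le_iSup (fun _ : (∀ y ∈ H'.verts, k + 1 ≤ (H'.neighborSet y).ncard) => H') hH'
    calc k + 1 ≤ (H'.neighborSet x).ncard := hH' x hxH'
      _ ≤ (K.neighborSet x).ncard :=
        Set.ncard_le_ncard (SimpleGraph.Subgraph.neighborSet_subset_of_subgraph hle x)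
          (Set.toFinite _)
  have hKmem : ∀ w : V, k + 1 ≤ coreNumber G w → w ∈ K.verts := by
    intro w hw
    obtain ⟨H', hwH', hdeg'⟩ := coreNumber_witness G w
    exact (hKverts w).2 ⟨H', fun y hy => le_trans hw (hdeg' y hy), hwH'⟩
  -- The part of H that lives in G
  set H₀ : G.Subgraph :=
    { verts := H.verts
      Adj := fun a b => H.Adj a b ∧ G.Adj a b
      adj_sub := fun h => h.2
      edge_vert := fun h => H.edge_vert h.1
      symm := ⟨fun a b h => ⟨h.1.symm, h.2.symm⟩⟩ } with hH₀def
  -- vertices of H with small core number have degree ≥ k+1 in H₀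
  have hB : ∀ w ∈ H.verts, coreNumber G w ≤ k → k + 1 ≤ (H₀.neighborSet w).ncard := by
    intro w hw hcw
    set D : Set V := {x | s(w, x) ∈ S} with hDdef
    have hsub : H.neighborSet w ⊆ H₀.neighborSet w ∪ D := by
      intro x hx
      have hadj : (G ⊔ fromEdgeSet S).Adj w x := H.adj_sub hx
      rcases hadj with hG | hSadj
      · exact Or.inl ⟨hx, hG⟩
      · exact Or.inr ((SimpleGraph.fromEdgeSet_adj S).1 hSadj).1
    have hD1 : D.ncard ≤ 1 := by
      rw [Set.ncard_le_one (Set.toFinite _)]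
      intro a ha b hb
      by_contra hab
      have hne : s(w, a) ≠ s(w, b) := by
        intro h
        exact hab ((Sym2.congr_right).1 h)
      have := hS2 _ ha _ hb hne w (Sym2.mem_mk_left w a) (Sym2.mem_mk_left w b)
      omega
    have hchain : (H.neighborSet w).ncard ≤ (H₀.neighborSet w).ncard + 1 :=
      calc (H.neighborSet w).ncard ≤ (H₀.neighborSet w ∪ D).ncard :=
            Set.ncard_le_ncard hsub (Set.toFinite _)
        _ ≤ (H₀.neighborSet w).ncard + D.ncard := Set.ncard_union_le _ _
        _ ≤ (H₀.neighborSet w).ncard + 1 := by omega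
    have := hdeg w hw
    omega
  -- the combined subgraph
  set J : G.Subgraph := H₀ ⊔ K with hJdef
  have hJdeg : ∀ x ∈ J.verts, k + 1 ≤ (J.neighborSet x).ncard := by
    intro x hx
    by_cases hxK : x ∈ K.verts
    · calc k + 1 ≤ (K.neighborSet x).ncard := hKdeg x hxK
        _ ≤ (J.neighborSet x).ncard :=
          Set.ncard_le_ncard
            (SimpleGraph.Subgraph.neighborSet_subset_of_subgraph le_sup_right x)
            (Set.toFinite _)
    · have hxH : x ∈ H.verts := by
        rw [hJdef, SimpleGraph.Subgraph.verts_sup] at hx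
        rcases hx with hx | hx
        · exact hx
        · exact absurd hx hxK
      have hcx : coreNumber G x ≤ k := by
        by_contra hc
        exact hxK (hKmem x (by omega))
      calc k + 1 ≤ (H₀.neighborSet x).ncard := hB x hxH hcx
        _ ≤ (J.neighborSet x).ncard :=
          Set.ncard_le_ncard
            (SimpleGraph.Subgraph.neighborSet_subset_of_subgraph le_sup_left x)
            (Set.toFinite _)
  have hmemJ : v ∈ J.verts := by
    rw [hJdef, SimpleGraph.Subgraph.verts_sup]
    exact Or.inl hvH
  have : k + 1 ≤ coreNumber G v :=
    le_csSup (coreSet_bddAbove G v) ⟨J, hmemJ, hJdeg⟩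
  omega
end

section
/- If a k-superior edge set E_k is inserted into a graph G, then for every vertex v with core_G(v) ≠ k, the core number of v does not change. -/
open SimpleGraph

/-- Restriction of a subgraph of `G ⊔ G₂` to the edges of `G`. -/
def restrictSub {V : Type*} (G G₂ : SimpleGraph V) (H : (G ⊔ G₂).Subgraph) : G.Subgraph where
  verts := H.verts
  Adj a b := H.Adj a b ∧ G.Adj a b
  adj_sub h := h.2
  edge_vert h := H.edge_vert h.1
  symm := ⟨fun a b h => ⟨H.adj_symm h.1, h.2.symm⟩⟩

/-- Transfer a subgraph along an adjacency inclusion. -/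
def transferSub {V : Type*} {G G' : SimpleGraph V} (h : ∀ a b, G.Adj a b → G'.Adj a b)
    (H : G.Subgraph) : G'.Subgraph where
  verts := H.verts
  Adj := H.Adj
  adj_sub ha := h _ _ (H.adj_sub ha)
  edge_vert := H.edge_vert
  symm := H.symm

section Aux

variable {V : Type*} [Fintype V]

lemma coreNumber_bddAbove (G : SimpleGraph V) (v : V) :
    BddAbove {k : ℕ | ∃ H : G.Subgraph, v ∈ H.verts ∧
      ∀ w ∈ H.verts, k ≤ (H.neighborSet w).ncard} := by
  refine ⟨Fintype.card V, fun k hk => ?_⟩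
  obtain ⟨H, hv, hdeg⟩ := hk
  calc k ≤ (H.neighborSet v).ncard := hdeg v hv
    _ ≤ (Set.univ : Set V).ncard := Set.ncard_le_ncard (Set.subset_univ _) Set.finite_univ
    _ = Fintype.card V := by rw [Set.ncard_univ, Nat.card_eq_fintype_card]

lemma le_coreNumber (G : SimpleGraph V) (v : V) {m : ℕ} (H : G.Subgraph) (hv : v ∈ H.verts)
    (h : ∀ w ∈ H.verts, m ≤ (H.neighborSet w).ncard) : m ≤ coreNumber G v :=
  le_csSup (coreNumber_bddAbove G v) ⟨H, hv, h⟩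

lemma exists_core_witness (G : SimpleGraph V) (v : V) : ∃ H : G.Subgraph, v ∈ H.verts ∧
    ∀ w ∈ H.verts, coreNumber G v ≤ (H.neighborSet w).ncard := by
  have h0 : (0 : ℕ) ∈ {k : ℕ | ∃ H : G.Subgraph, v ∈ H.verts ∧
      ∀ w ∈ H.verts, k ≤ (H.neighborSet w).ncard} :=
    ⟨G.singletonSubgraph v, by simp [SimpleGraph.singletonSubgraph_verts],
      fun w _ => Nat.zero_le _⟩
  exact Nat.sSup_mem ⟨0, h0⟩ (coreNumber_bddAbove G v)

lemma coreNumber_le_of_le {G G' : SimpleGraph V} (h : G ≤ G') (v : V) :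
    coreNumber G v ≤ coreNumber G' v := by
  obtain ⟨H, hv, hdeg⟩ := exists_core_witness G v
  exact le_coreNumber G' v (transferSub (fun a b ha => h ha) H) hv hdeg

/-- The (maximal) subgraph of `G` all of whose vertices have degree at least `m`. -/
noncomputable def maxCore (G : SimpleGraph V) (m : ℕ) : G.Subgraph :=
  sSup {H : G.Subgraph | ∀ w ∈ H.verts, m ≤ (H.neighborSet w).ncard}

lemma maxCore_minDeg (G : SimpleGraph V) (m : ℕ) :
    ∀ w ∈ (maxCore G m).verts, m ≤ ((maxCore G m).neighborSet w).ncard := by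
  intro w hw
  rw [maxCore, Subgraph.verts_sSup] at hw
  simp only [Set.mem_iUnion] at hw
  obtain ⟨H, hH, hwH⟩ := hw
  calc m ≤ (H.neighborSet w).ncard := hH w hwH
    _ ≤ ((maxCore G m).neighborSet w).ncard :=
      Set.ncard_le_ncard (Subgraph.neighborSet_subset_of_subgraph (le_sSup hH) w) (Set.toFinite _)

lemma mem_maxCore_iff (G : SimpleGraph V) (m : ℕ) (w : V) :
    w ∈ (maxCore G m).verts ↔ m ≤ coreNumber G w := by
  constructor
  · intro hw
    exact le_coreNumber G w _ hw (maxCore_minDeg G m)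
  · intro hm
    obtain ⟨H, hwH, hdeg⟩ := exists_core_witness G w
    rw [maxCore, Subgraph.verts_sSup]
    simp only [Set.mem_iUnion]
    exact ⟨H, fun x hx => hm.trans (hdeg x hx), hwH⟩

lemma mem_S_core {G : SimpleGraph V} {k : ℕ} {S : Set (Sym2 V)}
    (hS : IsKSuperiorInsertSet G k S) {a b : V} (hab : s(a,b) ∈ S) :
    k ≤ coreNumber G a ∧ k ≤ coreNumber G b ∧
      (coreNumber G a = k ∨ coreNumber G b = k) := by
  obtain ⟨-, u, w, huw, he, hu, hle⟩ := hS.1 _ hab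
  rw [Sym2.eq_iff] at he
  rcases he with ⟨rfl, rfl⟩ | ⟨rfl, rfl⟩
  · exact ⟨hu.ge, hu ▸ hle, Or.inl hu⟩
  · exact ⟨hu ▸ hle, hu.ge, Or.inr hu⟩

lemma S_nbr_subsingleton {G : SimpleGraph V} {k : ℕ} {S : Set (Sym2 V)}
    (hS : IsKSuperiorInsertSet G k S) {w : V} (hw : coreNumber G w ≤ k) :
    {x : V | s(w,x) ∈ S}.Subsingleton := by
  intro x hx y hy
  by_contra hne
  have h1 : s(w,x) ≠ s(w,y) := fun h => hne (Sym2.congr_right.mp h)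
  have := hS.2 _ hx _ hy h1 w (Sym2.mem_mk_left w x) (Sym2.mem_mk_left w y)
  omega

/-- Main lemma, case `m ≤ k`: a subgraph of `G ⊔ S` with min degree `≥ m`
only contains vertices of `G`-core number `≥ m`. -/
lemma lemA {G : SimpleGraph V} {k : ℕ} {S : Set (Sym2 V)} (hS : IsKSuperiorInsertSet G k S)
    {m : ℕ} (hm : m ≤ k) (H : (G ⊔ fromEdgeSet S).Subgraph)
    (hdeg : ∀ w ∈ H.verts, m ≤ (H.neighborSet w).ncard) :
    ∀ w ∈ H.verts, m ≤ coreNumber G w := by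
  classical
  set H₀ : G.Subgraph := restrictSub G (fromEdgeSet S) H with hH₀
  set K : G.Subgraph := H₀ ⊔ maxCore G m with hK
  have hKdeg : ∀ w ∈ K.verts, m ≤ (K.neighborSet w).ncard := by
    intro w hw
    by_cases hwC : w ∈ (maxCore G m).verts
    · calc m ≤ ((maxCore G m).neighborSet w).ncard := maxCore_minDeg G m w hwC
        _ ≤ (K.neighborSet w).ncard :=
          Set.ncard_le_ncard (Subgraph.neighborSet_subset_of_subgraph le_sup_right w)
            (Set.toFinite _)
    · have hwH : w ∈ H.verts := by
        rw [hK, Subgraph.verts_sup] at hw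
        exact hw.resolve_right hwC
      have hcw : coreNumber G w < m := by
        by_contra h
        push_neg at h
        exact hwC ((mem_maxCore_iff G m w).2 h)
      have hsub : H.neighborSet w ⊆ K.neighborSet w := by
        intro x hx
        have hx' : H.Adj w x := hx
        have hG : G.Adj w x := by
          have h2 := H.adj_sub hx'
          rw [SimpleGraph.sup_adj] at h2
          rcases h2 with h2 | h2
          · exact h2
          · rw [SimpleGraph.fromEdgeSet_adj] at h2
            exfalso
            have := (mem_S_core hS h2.1).1
            omega
        exact Subgraph.neighborSet_subset_of_subgraph le_sup_left w ⟨hx', hG⟩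
      calc m ≤ (H.neighborSet w).ncard := hdeg w hwH
        _ ≤ (K.neighborSet w).ncard := Set.ncard_le_ncard hsub (Set.toFinite _)
  intro w hw
  refine le_coreNumber G w K ?_ hKdeg
  rw [hK, Subgraph.verts_sup]
  exact Or.inl hw

/-- Main lemma, case `m ≥ k + 2`: a subgraph of `G ⊔ S` with min degree `≥ m`
only contains vertices of `G`-core number `≥ m`. -/
lemma lemB {G : SimpleGraph V} {k : ℕ} {S : Set (Sym2 V)} (hS : IsKSuperiorInsertSet G k S)
    {m : ℕ} (hm : k + 2 ≤ m) (H : (G ⊔ fromEdgeSet S).Subgraph)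
    (hdeg : ∀ w ∈ H.verts, m ≤ (H.neighborSet w).ncard) :
    ∀ w ∈ H.verts, m ≤ coreNumber G w := by
  classical
  set H₀ : G.Subgraph := restrictSub G (fromEdgeSet S) H with hH₀
  set K : G.Subgraph := H₀ ⊔ maxCore G (k+1) with hK
  have hKdeg : ∀ w ∈ K.verts, k + 1 ≤ (K.neighborSet w).ncard := by
    intro w hw
    by_cases hwC : w ∈ (maxCore G (k+1)).verts
    · calc k + 1 ≤ ((maxCore G (k+1)).neighborSet w).ncard := maxCore_minDeg G (k+1) w hwC
        _ ≤ (K.neighborSet w).ncard :=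
          Set.ncard_le_ncard (Subgraph.neighborSet_subset_of_subgraph le_sup_right w)
            (Set.toFinite _)
    · have hwH : w ∈ H.verts := by
        rw [hK, Subgraph.verts_sup] at hw
        exact hw.resolve_right hwC
      have hcw : coreNumber G w ≤ k := by
        by_contra h
        push_neg at h
        exact hwC ((mem_maxCore_iff G (k+1) w).2 h)
      set T : Set V := {x : V | s(w,x) ∈ S} with hT
      have hsub : H.neighborSet w ⊆ H₀.neighborSet w ∪ (T ∩ H.neighborSet w) := by
        intro x hx
        have hx' : H.Adj w x := hx
        by_cases hxT : x ∈ T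
        · exact Or.inr ⟨hxT, hx⟩
        · left
          refine ⟨hx', ?_⟩
          have h2 := H.adj_sub hx'
          rw [SimpleGraph.sup_adj] at h2
          rcases h2 with h2 | h2
          · exact h2
          · rw [SimpleGraph.fromEdgeSet_adj] at h2
            exact absurd h2.1 hxT
      have hTsub : (T ∩ H.neighborSet w).Subsingleton :=
        (S_nbr_subsingleton hS hcw).anti Set.inter_subset_left
      have hT1 : (T ∩ H.neighborSet w).ncard ≤ 1 := by
        rcases (T ∩ H.neighborSet w).eq_empty_or_nonempty with h | ⟨x, hx⟩
        · simp [h]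
        · have hss : T ∩ H.neighborSet w ⊆ {x} := fun y hy => hTsub hy hx
          calc (T ∩ H.neighborSet w).ncard ≤ ({x} : Set V).ncard :=
                Set.ncard_le_ncard hss (Set.toFinite _)
            _ = 1 := Set.ncard_singleton x
      have hcalc : m ≤ (H₀.neighborSet w).ncard + 1 := by
        have h1 : (H.neighborSet w).ncard ≤
            (H₀.neighborSet w ∪ (T ∩ H.neighborSet w)).ncard :=
          Set.ncard_le_ncard hsub (Set.toFinite _)
        have h2 : (H₀.neighborSet w ∪ (T ∩ H.neighborSet w)).ncard ≤
            (H₀.neighborSet w).ncard + (T ∩ H.neighborSet w).ncard :=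
          Set.ncard_union_le _ _
        have h3 := hdeg w hwH
        omega
      have h4 : k + 1 ≤ (H₀.neighborSet w).ncard := by omega
      calc k + 1 ≤ (H₀.neighborSet w).ncard := h4
        _ ≤ (K.neighborSet w).ncard :=
          Set.ncard_le_ncard (Subgraph.neighborSet_subset_of_subgraph le_sup_left w)
            (Set.toFinite _)
  have hall : ∀ w ∈ H.verts, k + 1 ≤ coreNumber G w := by
    intro w hw
    refine le_coreNumber G w K ?_ hKdeg
    rw [hK, Subgraph.verts_sup]
    exact Or.inl hw
  have hGadj : ∀ a b : V, H.Adj a b → G.Adj a b := by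
    intro a b hab
    have h2 := H.adj_sub hab
    rw [SimpleGraph.sup_adj] at h2
    rcases h2 with h2 | h2
    · exact h2
    · rw [SimpleGraph.fromEdgeSet_adj] at h2
      exfalso
      obtain ⟨-, -, hk⟩ := mem_S_core hS h2.1
      have ha := hall a (H.edge_vert hab)
      have hb := hall b (H.edge_vert (H.adj_symm hab))
      rcases hk with h | h <;> omega
  intro w hw
  exact le_coreNumber G w
    { verts := H.verts, Adj := H.Adj, adj_sub := fun ha => hGadj _ _ ha,
      edge_vert := fun h => H.edge_vert h, symm := H.symm } hw hdeg

end Aux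

theorem kSuperiorInsert_core_unchanged {V : Type*} [Fintype V] (G : SimpleGraph V)
    (k : ℕ) (S : Set (Sym2 V)) (hS : IsKSuperiorInsertSet G k S)
    (v : V) (hv : coreNumber G v ≠ k) :
    coreNumber (G ⊔ fromEdgeSet S) v = coreNumber G v := by
  classical
  refine le_antisymm ?_ (coreNumber_le_of_le le_sup_left v)
  by_contra hlt
  push_neg at hlt
  obtain ⟨H, hvH, hdeg⟩ := exists_core_witness (G ⊔ fromEdgeSet S) v
  have hdeg' : ∀ w ∈ H.verts, coreNumber G v + 1 ≤ (H.neighborSet w).ncard :=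
    fun w hw => le_trans (Nat.succ_le_of_lt hlt) (hdeg w hw)
  rcases lt_or_gt_of_ne hv with hck | hck
  · have := lemA hS (by omega : coreNumber G v + 1 ≤ k) H hdeg' v hvH
    omega
  · have := lemB hS (by omega : k + 2 ≤ coreNumber G v + 1) H hdeg' v hvH
    omega
end
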